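/- Let x be a counital comonoid object in a monoidal category C, F = Hom_C(x, −) with its induced lax monoidal structure, and G : Cᵒᵖ → D a lax monoidal functor to a cocomplete braided monoidal category D. Then the isomorphism G ⊗_C F ≅ G(x) (evaluation of the coend at the corepresenting object) is an isomorphism of monoid objects in D, where G(x) has the algebra structure induced by G(x) ⊗ G(x) → G(x ⊗ x) → G(x) (using the comultiplication of x) and 1_D → G(1_C) → G(x) (using the counit of x). -/

import Mathlib

open CategoryTheory CategoryTheory.Limits CategoryTheory.MonoidalCategory Opposite

noncomputable section

universe v u

variable {C : Type v} [SmallCategory C] {D : Type u} [Category.{v} D] [HasColimits D]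

/-- The source of the coequalizer diagram defining the tensor product of functors
`G ⊗_C F`: the coproduct `∐_{f : c → c'} G(c') · F(c)`. -/
def tensorLeftObj (F : C ⥤ Type v) (G : Cᵒᵖ ⥤ D) : D :=
  ∐ (fun p : Σ c c' : C, (c ⟶ c') × F.obj c => G.obj (op p.2.1))

/-- The target of the coequalizer diagram defining `G ⊗_C F`. -/
def tensorRightObj (F : C ⥤ Type v) (G : Cᵒᵖ ⥤ D) : D :=
  ∐ (fun p : Σ c : C, F.obj c => G.obj (op p.1))

/-- The first map, acting by `F(f)` on the `F`-coordinate. -/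
def tensorMapF (F : C ⥤ Type v) (G : Cᵒᵖ ⥤ D) : tensorLeftObj F G ⟶ tensorRightObj F G :=
  Sigma.desc fun p =>
    Sigma.ι (fun q : Σ c : C, F.obj c => G.obj (op q.1)) ⟨p.2.1, F.map p.2.2.1 p.2.2.2⟩

/-- The second map, acting by `G(f)` on the `G`-coordinate. -/
def tensorMapG (F : C ⥤ Type v) (G : Cᵒᵖ ⥤ D) : tensorLeftObj F G ⟶ tensorRightObj F G :=
  Sigma.desc fun p =>
    G.map p.2.2.1.op ≫ Sigma.ι (fun q : Σ c : C, F.obj c => G.obj (op q.1)) ⟨p.1, p.2.2.2⟩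

/-- The tensor product (coend) `G ⊗_C F` as the coequalizer of the two maps. -/
def functorTensor (F : C ⥤ Type v) (G : Cᵒᵖ ⥤ D) : D :=
  coequalizer (tensorMapF F G) (tensorMapG F G)

/-- The canonical coprojection `G(c) ⟶ G ⊗_C F` indexed by `w ∈ F(c)`. -/
def coendPr (F : C ⥤ Type v) (G : Cᵒᵖ ⥤ D) (c : C) (w : F.obj c) :
    G.obj (op c) ⟶ functorTensor F G :=
  Sigma.ι (fun q : Σ c : C, F.obj c => G.obj (op q.1)) ⟨c, w⟩ ≫ coequalizer.π _ _



section Helpers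

lemma coend_hom_ext (F : C ⥤ Type v) (G : Cᵒᵖ ⥤ D) {Z : D}
    {h₁ h₂ : functorTensor F G ⟶ Z}
    (H : ∀ (c : C) (w : F.obj c), coendPr F G c w ≫ h₁ = coendPr F G c w ≫ h₂) :
    h₁ = h₂ := by
  apply coequalizer.hom_ext
  apply Sigma.hom_ext
  intro p
  exact (Category.assoc _ _ _).symm.trans ((H p.1 p.2).trans (Category.assoc _ _ _))

lemma coend_rel (F : C ⥤ Type v) (G : Cᵒᵖ ⥤ D) {c c' : C} (f : c ⟶ c') (w : F.obj c) :
    coendPr F G c' (F.map f w) = G.map f.op ≫ coendPr F G c w := by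
  have h := Sigma.ι (fun p : Σ c c' : C, (c ⟶ c') × F.obj c => G.obj (op p.2.1))
      ⟨c, c', f, w⟩ ≫= coequalizer.condition (tensorMapF F G) (tensorMapG F G)
  have e1 : Sigma.ι (fun p : Σ c c' : C, (c ⟶ c') × F.obj c => G.obj (op p.2.1))
      ⟨c, c', f, w⟩ ≫ tensorMapF F G =
      Sigma.ι (fun q : Σ c : C, F.obj c => G.obj (op q.1)) ⟨c', F.map f w⟩ := Sigma.ι_desc _ _
  have e2 : Sigma.ι (fun p : Σ c c' : C, (c ⟶ c') × F.obj c => G.obj (op p.2.1))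
      ⟨c, c', f, w⟩ ≫ tensorMapG F G =
      G.map f.op ≫ Sigma.ι (fun q : Σ c : C, F.obj c => G.obj (op q.1)) ⟨c, w⟩ := Sigma.ι_desc _ _
  exact (congrArg (· ≫ coequalizer.π (tensorMapF F G) (tensorMapG F G)) e1).symm.trans
    ((Category.assoc _ _ _).trans (h.trans ((Category.assoc _ _ _).symm.trans
      ((congrArg (· ≫ coequalizer.π (tensorMapF F G) (tensorMapG F G)) e2).trans
        (Category.assoc _ _ _)))))

lemma coend_whiskerRight_ext [MonoidalCategory D]
    [∀ X : D, PreservesColimits (tensorRight X)]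
    (F : C ⥤ Type v) (G : Cᵒᵖ ⥤ D) (Y : D) {Z : D}
    {h₁ h₂ : functorTensor F G ⊗ Y ⟶ Z}
    (H : ∀ (c : C) (w : F.obj c),
      (coendPr F G c w ▷ Y) ≫ h₁ = (coendPr F G c w ▷ Y) ≫ h₂) :
    h₁ = h₂ := by
  have hπ : Epi ((tensorRight Y).map (coequalizer.π (tensorMapF F G) (tensorMapG F G))) :=
    (tensorRight Y).map_epi _
  have hπ' : Epi (coequalizer.π (tensorMapF F G) (tensorMapG F G) ▷ Y) := hπ
  apply (cancel_epi (coequalizer.π (tensorMapF F G) (tensorMapG F G) ▷ Y)).1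
  have hc := isColimitOfPreserves (tensorRight Y)
    (colimit.isColimit (Discrete.functor (fun q : Σ c : C, F.obj c => G.obj (op q.1))))
  apply hc.hom_ext
  rintro ⟨p⟩
  have hp := H p.1 p.2
  unfold coendPr at hp
  exact (Category.assoc _ _ _).symm.trans ((congrArg (· ≫ h₁) (comp_whiskerRight _ _ _).symm).trans
    (hp.trans ((congrArg (· ≫ h₂) (comp_whiskerRight _ _ _)).trans (Category.assoc _ _ _))))

lemma coend_whiskerLeft_ext [MonoidalCategory D]
    [∀ X : D, PreservesColimits (tensorLeft X)]
    (F : C ⥤ Type v) (G : Cᵒᵖ ⥤ D) (Y : D) {Z : D}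
    {h₁ h₂ : Y ⊗ functorTensor F G ⟶ Z}
    (H : ∀ (c : C) (w : F.obj c),
      (Y ◁ coendPr F G c w) ≫ h₁ = (Y ◁ coendPr F G c w) ≫ h₂) :
    h₁ = h₂ := by
  have hπ : Epi ((tensorLeft Y).map (coequalizer.π (tensorMapF F G) (tensorMapG F G))) :=
    (tensorLeft Y).map_epi _
  have hπ' : Epi (Y ◁ coequalizer.π (tensorMapF F G) (tensorMapG F G)) := hπ
  apply (cancel_epi (Y ◁ coequalizer.π (tensorMapF F G) (tensorMapG F G))).1
  have hc := isColimitOfPreserves (tensorLeft Y)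
    (colimit.isColimit (Discrete.functor (fun q : Σ c : C, F.obj c => G.obj (op q.1))))
  apply hc.hom_ext
  rintro ⟨p⟩
  have hp := H p.1 p.2
  unfold coendPr at hp
  exact (Category.assoc _ _ _).symm.trans
    ((congrArg (· ≫ h₁) (MonoidalCategory.whiskerLeft_comp _ _ _).symm).trans
    (hp.trans ((congrArg (· ≫ h₂) (MonoidalCategory.whiskerLeft_comp _ _ _)).trans
      (Category.assoc _ _ _))))

end Helpers

open CategoryTheory.MonoidalCategory in
/-- For a counital comonoid object `x` in `C` with comultiplication `δ` and counit `e`,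
and a lax monoidal `G : Cᵒᵖ ⥤ D`, the canonical isomorphism `G ⊗_C h^x ≅ G(x)`
(given on the component indexed by `w : x ⟶ c` by `G(w)`) is an isomorphism of
monoids: it intertwines the monoid structure of the coend (induced by the lax
monoidal structures) with the monoid structure on `G(x)` induced by the comonoid
structure of `x`. -/
theorem coend_corepresentable_monoid_iso
    [MonoidalCategory C] [MonoidalCategory D] [BraidedCategory D]
    [∀ X : D, PreservesColimits (tensorLeft X)]
    [∀ X : D, PreservesColimits (tensorRight X)]
    (x : C) (δ : x ⟶ x ⊗ x) (e : x ⟶ 𝟙_ C)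
    (hcoassoc : δ ≫ (δ ▷ x) ≫ (α_ x x x).hom = δ ≫ (x ◁ δ))
    (hcounit_left : δ ≫ (e ▷ x) ≫ (λ_ x).hom = 𝟙 x)
    (hcounit_right : δ ≫ (x ◁ e) ≫ (ρ_ x).hom = 𝟙 x)
    (G : LaxMonoidalFunctor Cᵒᵖ D)
    -- the canonical comparison map, characterized on coprojections
    (Φ : functorTensor (coyoneda.obj (op x)) G.toFunctor ⟶ G.obj (op x))
    (hΦ : ∀ (c : C) (w : x ⟶ c),
      coendPr (coyoneda.obj (op x)) G.toFunctor c w ≫ Φ = G.map w.op)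
    -- the induced monoid structure on the coend
    (mul : functorTensor (coyoneda.obj (op x)) G.toFunctor ⊗
        functorTensor (coyoneda.obj (op x)) G.toFunctor ⟶
        functorTensor (coyoneda.obj (op x)) G.toFunctor)
    (unit : 𝟙_ D ⟶ functorTensor (coyoneda.obj (op x)) G.toFunctor)
    (hmul : ∀ (c c' : C) (w : x ⟶ c) (w' : x ⟶ c'),
      (coendPr (coyoneda.obj (op x)) G.toFunctor c w ⊗ₘ
          coendPr (coyoneda.obj (op x)) G.toFunctor c' w') ≫ mul =
        Functor.LaxMonoidal.μ G.toFunctor (op c) (op c') ≫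
          coendPr (coyoneda.obj (op x)) G.toFunctor (c ⊗ c') (δ ≫ (w ⊗ₘ w')))
    (hunit : unit = Functor.LaxMonoidal.ε G.toFunctor ≫
      coendPr (coyoneda.obj (op x)) G.toFunctor (𝟙_ C) e) :
    IsIso Φ ∧
      mul ≫ Φ = (Φ ⊗ₘ Φ) ≫ Functor.LaxMonoidal.μ G.toFunctor (op x) (op x) ≫ G.map δ.op ∧
      unit ≫ Φ = Functor.LaxMonoidal.ε G.toFunctor ≫ G.map e.op := by
  have hψΦ : coendPr (coyoneda.obj (op x)) G.toFunctor x (𝟙 x) ≫ Φ = 𝟙 _ := by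
    rw [hΦ x (𝟙 x)]; simp
  have hΦψ : Φ ≫ coendPr (coyoneda.obj (op x)) G.toFunctor x (𝟙 x) = 𝟙 _ := by
    apply coend_hom_ext
    intro c w
    rw [← Category.assoc, hΦ c w, Category.comp_id]
    have h := coend_rel (coyoneda.obj (op x)) G.toFunctor (c := x) (c' := c) w (𝟙 x)
    rw [show (coyoneda.obj (op x)).map w (𝟙 x) = w from Category.id_comp w] at h
    exact h.symm
  refine ⟨⟨coendPr (coyoneda.obj (op x)) G.toFunctor x (𝟙 x), hΦψ, hψΦ⟩, ?_, ?_⟩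
  · apply coend_whiskerRight_ext
    intro c w
    apply coend_whiskerLeft_ext
    intro c' w'
    have key : (G.obj (op c) ◁ coendPr (coyoneda.obj (op x)) G.toFunctor c' w') ≫
        (coendPr (coyoneda.obj (op x)) G.toFunctor c w ▷
          functorTensor (coyoneda.obj (op x)) G.toFunctor) =
        coendPr (coyoneda.obj (op x)) G.toFunctor c w ⊗ₘ
          coendPr (coyoneda.obj (op x)) G.toFunctor c' w' :=
      (tensorHom_def' _ _).symm
    simp only [← Category.assoc]
    rw [key]
    simp only [Category.assoc]
    have hop : (w ⊗ₘ w').op = (w.op ⊗ₘ w'.op : op (c ⊗ c') ⟶ op x ⊗ op x) := rfl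
    have L : (coendPr (coyoneda.obj (op x)) G.toFunctor c w ⊗ₘ
          coendPr (coyoneda.obj (op x)) G.toFunctor c' w') ≫ mul ≫ Φ =
        Functor.LaxMonoidal.μ G.toFunctor (op c) (op c') ≫
          G.map (w.op ⊗ₘ w'.op) ≫ G.map δ.op := by
      rw [← Category.assoc, hmul c c' w w', Category.assoc, hΦ, op_comp, G.map_comp, hop]
    have R : (coendPr (coyoneda.obj (op x)) G.toFunctor c w ⊗ₘ
          coendPr (coyoneda.obj (op x)) G.toFunctor c' w') ≫ (Φ ⊗ₘ Φ) ≫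
          Functor.LaxMonoidal.μ G.toFunctor (op x) (op x) ≫ G.map δ.op =
        Functor.LaxMonoidal.μ G.toFunctor (op c) (op c') ≫
          G.map (w.op ⊗ₘ w'.op) ≫ G.map δ.op := by
      have nat := Functor.LaxMonoidal.μ_natural G.toFunctor w.op w'.op
      rw [← Category.assoc, tensorHom_comp_tensorHom, hΦ c w, hΦ c' w', ← Category.assoc]
      exact (congrArg (· ≫ G.map δ.op) nat).trans (Category.assoc _ _ _)
    exact L.trans R.symm
  · rw [hunit, Category.assoc, hΦ]

end
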